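/- Let n ≥ 3, let C be the n×n companion matrix built from a₁,…,aₙ ∈ ℝ, let d ∈ ℝⁿ with d₁ ≠ 0, and let μ ∈ ℝ. For x ∈ ℝⁿ with x₁ = 0, define G = Cx + eₙμ − (x₂/d₁) d (the sliding vector field of the normal form scaled by the positive factor (F₁ᴸ − F₁ᴿ)/(−F₁ᴿ)). Then G₁ = 0 and the reduced vector (G₂,…,Gₙ) ∈ ℝ^{n−1} equals M̃(x₂,…,xₙ)ᵀ + μ ẽ_{n−1}, where M̃ is the (n−1)×(n−1) companion matrix with entries M̃_{i,1} = −d_{i+1}/d₁ for i = 1,…,n−1, M̃_{i,i+1} = 1 for i = 1,…,n−2, all other entries zero, and ẽ_{n−1} is the last standard basis vector of ℝ^{n−1}. -/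

import Mathlib

open Matrix

/-- The `n×n` companion matrix with first column `(−a₁,…,−aₙ)ᵀ` and
superdiagonal ones (`a i` encodes `a_{i+1}`). -/
def compC {n : ℕ} (a : Fin (n + 1) → ℝ) : Matrix (Fin (n + 1)) (Fin (n + 1)) ℝ :=
  Matrix.of fun i j =>
    if (j : ℕ) = 0 then -a i else if (j : ℕ) = (i : ℕ) + 1 then 1 else 0

/-- The `(n−1)×(n−1)` companion matrix `M̃` of the scaled sliding vector field,
built from `d` with `M̃_{i,1} = −d_{i+1}/d₁`. -/
noncomputable def slidingComp {n : ℕ} (d : Fin (n + 3) → ℝ) :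
    Matrix (Fin (n + 2)) (Fin (n + 2)) ℝ :=
  Matrix.of fun i j =>
    if (j : ℕ) = 0 then -d i.succ / d 0
    else if (j : ℕ) = (i : ℕ) + 1 then 1 else 0

/-- The scaled sliding vector field `G = Cx + eₙμ − (x₂/d₁)d` of the normal
form has zero first component, and its reduced vector `(G₂,…,Gₙ)` equals
`M̃(x₂,…,xₙ)ᵀ + μ ẽ_{n−1}`. -/


lemma mulVec_comp_aux {m : ℕ} (c : Fin (m + 1) → ℝ) (y : Fin (m + 1) → ℝ)
    (i : Fin (m + 1)) :
    (Matrix.of fun i j : Fin (m + 1) =>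
        if (j : ℕ) = 0 then c i else if (j : ℕ) = (i : ℕ) + 1 then 1 else 0).mulVec y i
      = c i * y 0 + (if h : (i : ℕ) + 1 < m + 1 then y ⟨(i : ℕ) + 1, h⟩ else 0) := by
  have : ∀ j : Fin (m + 1),
      (if (j : ℕ) = 0 then c i else if (j : ℕ) = (i : ℕ) + 1 then (1:ℝ) else 0) * y j
      = (if j = 0 then c i * y 0 else 0)
        + (if (j : ℕ) = (i : ℕ) + 1 then y j else 0) := by
    intro j
    rcases eq_or_ne j 0 with rfl | hj
    · simp
    · have hj' : (j : ℕ) ≠ 0 := fun h => hj (Fin.ext h)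
      simp [hj, hj']
  simp only [Matrix.mulVec, dotProduct, Matrix.of_apply, this, Finset.sum_add_distrib]
  congr 1
  · simp
  · by_cases h : (i : ℕ) + 1 < m + 1
    · rw [dif_pos h]
      have : ∀ j : Fin (m+1), ((j : ℕ) = (i:ℕ)+1) ↔ j = ⟨(i:ℕ)+1, h⟩ := by
        intro j; rw [Fin.ext_iff]
      simp only [this]
      rw [Finset.sum_ite_eq' Finset.univ]
      simp
    · rw [dif_neg h]
      apply Finset.sum_eq_zero
      intro j _
      have : (j : ℕ) ≠ (i : ℕ) + 1 := by omega
      simp [this]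

theorem sliding_vectorField_reduction (n : ℕ) (a : Fin (n + 3) → ℝ)
    (d : Fin (n + 3) → ℝ) (hd : d 0 ≠ 0) (μ : ℝ)
    (x : Fin (n + 3) → ℝ) (hx1 : x 0 = 0) :
    ((compC a).mulVec x + μ • (Pi.single (Fin.last (n + 2)) (1 : ℝ) : Fin (n + 3) → ℝ)
        - (x 1 / d 0) • d) 0 = 0 ∧
      (fun i : Fin (n + 2) =>
          ((compC a).mulVec x
            + μ • (Pi.single (Fin.last (n + 2)) (1 : ℝ) : Fin (n + 3) → ℝ)
            - (x 1 / d 0) • d) i.succ)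
        = (slidingComp d).mulVec (fun i : Fin (n + 2) => x i.succ)
          + μ • (Pi.single (Fin.last (n + 1)) (1 : ℝ) : Fin (n + 2) → ℝ) := by
  have hC : ∀ i : Fin (n + 3), (compC a).mulVec x i
      = -a i * x 0 + (if h : (i : ℕ) + 1 < n + 3 then x ⟨(i : ℕ) + 1, h⟩ else 0) :=
    fun i => mulVec_comp_aux (fun i => -a i) x i
  have hS : ∀ i : Fin (n + 2), (slidingComp d).mulVec (fun i : Fin (n + 2) => x i.succ) i
      = -d i.succ / d 0 * x 1
        + (if h : (i : ℕ) + 1 < n + 2 then x (⟨(i : ℕ) + 1, h⟩ : Fin (n+2)).succ else 0) := by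
    intro i
    have := mulVec_comp_aux (m := n + 1) (fun i => -d i.succ / d 0)
      (fun i : Fin (n + 2) => x i.succ) i
    exact this
  constructor
  · have h0 : (Fin.last (n + 2)) ≠ (0 : Fin (n + 3)) := by
      simp [Fin.ext_iff]
    simp only [Pi.sub_apply, Pi.add_apply, Pi.smul_apply, hC, hx1,
      Pi.single_apply]
    have : ((0 : Fin (n+3)) : ℕ) + 1 < n + 3 := by simp
    rw [dif_pos this]
    have hx : x ⟨((0:Fin (n+3)) :ℕ) + 1, this⟩ = x 1 := rfl
    rw [hx]
    rw [if_neg (by simp [Fin.ext_iff] : (0 : Fin (n+3)) ≠ Fin.last (n+2))]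
    field_simp
    rw [smul_eq_mul, smul_eq_mul, div_mul_cancel₀ _ hd]; ring
  · funext i
    simp only [Pi.sub_apply, Pi.add_apply, Pi.smul_apply, hC, hS, hx1, Pi.single_apply,
      smul_eq_mul]
    have hcond : ((i.succ : Fin (n+3)) : ℕ) + 1 < n + 3 ↔ (i : ℕ) + 1 < n + 2 := by
      simp [Fin.val_succ]
    have hlast : (i.succ : Fin (n+3)) = Fin.last (n+2) ↔ i = Fin.last (n+1) := by
      simp [Fin.ext_iff, Fin.val_succ]
    by_cases h : (i : ℕ) + 1 < n + 2
    · rw [dif_pos (hcond.mpr h), dif_pos h]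
      have hx : x ⟨((i.succ : Fin (n+3)) : ℕ) + 1, hcond.mpr h⟩
          = x (⟨(i : ℕ) + 1, h⟩ : Fin (n+2)).succ := by
        congr 1
      rw [hx]
      have : i ≠ Fin.last (n+1) := by
        intro hh; rw [hh] at h; simp [Fin.last] at h
      rw [if_neg (fun hh => this (hlast.mp hh)), if_neg this]
      field_simp
      ring
    · rw [dif_neg (fun hh => h (hcond.mp hh)), dif_neg h]
      have : i = Fin.last (n+1) := by
        have := i.isLt; apply Fin.ext; simp [Fin.last]; omega
      rw [if_pos (hlast.mpr this), if_pos this]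
      field_simp
      ring
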